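/- Let γ : [0,ξ] → ℂ^{m2×m} be differentiable with γ'(x) j γ(x)* = 0 and γ(x) j γ(x)* = -I_{m2} on [0,ξ], where j = diag(I_{m1},-I_{m2}) and γ = [γ₁ γ₂] with γ₂(x) invertible for all x. Then γ₂' = γ₂ · (γ₂⁻¹γ₁)' (γ₂⁻¹γ₁)* (I_{m2} − (γ₂⁻¹γ₁)(γ₂⁻¹γ₁)*)⁻¹ on [0,ξ]. -/

import Mathlib

open Matrix

/-- The signature matrix `j = diag(I_{m1}, -I_{m2})`. -/
noncomputable def sigJ (m1 m2 : ℕ) : Matrix (Fin m1 ⊕ Fin m2) (Fin m1 ⊕ Fin m2) ℂ :=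
  Matrix.fromBlocks 1 0 0 (-1)

lemma sigJ_block_mul {m1 m2 : ℕ} (M N : Matrix (Fin m2) (Fin m1) ℂ)
    (P Q : Matrix (Fin m2) (Fin m2) ℂ) :
    fromCols M P * sigJ m1 m2 * (fromCols N Q).conjTranspose =
      M * N.conjTranspose - P * Q.conjTranspose := by
  rw [sigJ, fromCols_mul_fromBlocks, conjTranspose_fromCols_eq_fromRows_conjTranspose,
    fromCols_mul_fromRows]
  simp [sub_eq_add_neg]

lemma hasDerivAt_matrix_mul {n p q : Type*} [Fintype p]
    (M : ℝ → Matrix n p ℂ) (M' : Matrix n p ℂ) (N : ℝ → Matrix p q ℂ) (N' : Matrix p q ℂ)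
    (x : ℝ) (hM : ∀ i j, HasDerivAt (fun t => M t i j) (M' i j) x)
    (hN : ∀ j k, HasDerivAt (fun t => N t j k) (N' j k) x) (i : n) (k : q) :
    HasDerivAt (fun t => (M t * N t) i k) ((M' * N x + M x * N') i k) x := by
  simp only [Matrix.mul_apply, Matrix.add_apply]
  rw [← Finset.sum_add_distrib]
  exact HasDerivAt.fun_sum fun j _ => (hM i j).mul (hN j k)

/-- if `γ' j γ* = 0`, `γ j γ* = -I` and `γ₂` is invertible, then
`γ₂' = γ₂ (γ₂⁻¹γ₁)' (γ₂⁻¹γ₁)* (I − (γ₂⁻¹γ₁)(γ₂⁻¹γ₁)*)⁻¹` on `[0,ξ]`. -/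
theorem gamma2_ode (m1 m2 : ℕ) (ξ : ℝ)
    (γ γ' : ℝ → Matrix (Fin m2) (Fin m1 ⊕ Fin m2) ℂ)
    (γ₁ γ₁' : ℝ → Matrix (Fin m2) (Fin m1) ℂ)
    (γ₂ γ₂' : ℝ → Matrix (Fin m2) (Fin m2) ℂ)
    (hγ₁ : ∀ x i k, γ₁ x i k = γ x i (Sum.inl k))
    (hγ₂ : ∀ x i k, γ₂ x i k = γ x i (Sum.inr k))
    (hγ₁' : ∀ x i k, γ₁' x i k = γ' x i (Sum.inl k))
    (hγ₂' : ∀ x i k, γ₂' x i k = γ' x i (Sum.inr k))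
    (hγd : ∀ x ∈ Set.Icc (0:ℝ) ξ, ∀ i k, HasDerivAt (fun t => γ t i k) (γ' x i k) x)
    (h0 : ∀ x ∈ Set.Icc (0:ℝ) ξ, γ' x * sigJ m1 m2 * (γ x).conjTranspose = 0)
    (hneg : ∀ x ∈ Set.Icc (0:ℝ) ξ, γ x * sigJ m1 m2 * (γ x).conjTranspose = -1)
    (hinv : ∀ x ∈ Set.Icc (0:ℝ) ξ, IsUnit (γ₂ x))
    (D : ℝ → Matrix (Fin m2) (Fin m1) ℂ)
    (hD : ∀ x ∈ Set.Icc (0:ℝ) ξ, ∀ i k,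
      HasDerivAt (fun t => ((γ₂ t)⁻¹ * γ₁ t) i k) (D x i k) x) :
    ∀ x ∈ Set.Icc (0:ℝ) ξ,
      γ₂' x = γ₂ x * D x * ((γ₂ x)⁻¹ * γ₁ x).conjTranspose *
        ((1 : Matrix (Fin m2) (Fin m2) ℂ)
          - ((γ₂ x)⁻¹ * γ₁ x) * ((γ₂ x)⁻¹ * γ₁ x).conjTranspose)⁻¹ := by
  intro x hx
  -- column decompositions
  have hcols : ∀ t, γ t = fromCols (γ₁ t) (γ₂ t) := by
    intro t
    ext i (k | k)
    · simp [fromCols_apply_inl, hγ₁]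
    · simp [fromCols_apply_inr, hγ₂]
  have hcols' : ∀ t, γ' t = fromCols (γ₁' t) (γ₂' t) := by
    intro t
    ext i (k | k)
    · simp [fromCols_apply_inl, hγ₁']
    · simp [fromCols_apply_inr, hγ₂']
  -- block identities
  have eq1 : γ₁ x * (γ₁ x)ᴴ - γ₂ x * (γ₂ x)ᴴ = -1 := by
    have := hneg x hx
    rwa [hcols x, sigJ_block_mul] at this
  have eq2 : γ₁' x * (γ₁ x)ᴴ - γ₂' x * (γ₂ x)ᴴ = 0 := by
    have := h0 x hx
    rwa [hcols' x, hcols x, sigJ_block_mul] at this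
  have eq1' : γ₂ x * (γ₂ x)ᴴ - γ₁ x * (γ₁ x)ᴴ = 1 := by
    rw [← neg_sub (γ₁ x * (γ₁ x)ᴴ) (γ₂ x * (γ₂ x)ᴴ), eq1, neg_neg]
  have eq2' : γ₁' x * (γ₁ x)ᴴ = γ₂' x * (γ₂ x)ᴴ := sub_eq_zero.mp eq2
  -- invertibility
  have hU : IsUnit (γ₂ x) := hinv x hx
  have hdx : IsUnit (γ₂ x).det := (Matrix.isUnit_iff_isUnit_det _).mp hU
  have hdxH : IsUnit ((γ₂ x)ᴴ).det := (Matrix.isUnit_iff_isUnit_det _).mp (by simpa using hU)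
  -- entrywise derivatives of γ₁ and γ₂
  have d1 : ∀ i k, HasDerivAt (fun t => γ₁ t i k) (γ₁' x i k) x := by
    intro i k
    simpa only [← hγ₁, ← hγ₁'] using hγd x hx i (Sum.inl k)
  have d2 : ∀ i k, HasDerivAt (fun t => γ₂ t i k) (γ₂' x i k) x := by
    intro i k
    simpa only [← hγ₂, ← hγ₂'] using hγd x hx i (Sum.inr k)
  -- continuity of det γ₂ near x, giving eventual invertibility
  have hcont : ContinuousAt (fun t => γ₂ t) x :=
    continuousAt_pi.2 fun i => continuousAt_pi.2 fun k => (d2 i k).continuousAt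
  have hdetc : ContinuousAt (fun t => (γ₂ t).det) x :=
    (continuous_id.matrix_det.continuousAt).comp hcont
  have hdet0 : (γ₂ x).det ≠ 0 := by
    simpa using hdx.ne_zero
  have hev : ∀ᶠ t in nhds x, γ₂ t * ((γ₂ t)⁻¹ * γ₁ t) = γ₁ t := by
    filter_upwards [hdetc.eventually_ne hdet0] with t ht
    rw [← Matrix.mul_assoc, Matrix.mul_nonsing_inv _ (isUnit_iff_ne_zero.mpr ht), Matrix.one_mul]
  -- derivative of γ₂ * (γ₂⁻¹ γ₁)
  have d3 : ∀ i k, HasDerivAt (fun t => (γ₂ t * ((γ₂ t)⁻¹ * γ₁ t)) i k)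
      ((γ₂' x * ((γ₂ x)⁻¹ * γ₁ x) + γ₂ x * D x) i k) x :=
    fun i k => hasDerivAt_matrix_mul _ _ _ _ x d2 (hD x hx) i k
  have eq3 : γ₁' x = γ₂' x * ((γ₂ x)⁻¹ * γ₁ x) + γ₂ x * D x := by
    ext i k
    refine (d1 i k).unique ((d3 i k).congr_of_eventuallyEq ?_)
    filter_upwards [hev] with t ht
    rw [ht]
  -- algebraic computation
  set A := γ₂ x
  set B := γ₁ x
  set E := A⁻¹ * B with hE
  have hAE : A * E = B := by
    rw [hE, ← Matrix.mul_assoc, Matrix.mul_nonsing_inv _ hdx, Matrix.one_mul]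
  have hEH : Eᴴ * Aᴴ = Bᴴ := by
    rw [← Matrix.conjTranspose_mul, hAE]
  have hinv1 : (1 : Matrix (Fin m2) (Fin m2) ℂ) - E * Eᴴ = A⁻¹ * Aᴴ⁻¹ := by
    have hEE : E * Eᴴ = A⁻¹ * (B * Bᴴ) * Aᴴ⁻¹ := by
      rw [hE, Matrix.conjTranspose_mul, Matrix.conjTranspose_nonsing_inv]
      simp only [Matrix.mul_assoc]
    have h1 : (1 : Matrix (Fin m2) (Fin m2) ℂ) = A⁻¹ * (A * Aᴴ) * Aᴴ⁻¹ := by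
      rw [← Matrix.mul_assoc A⁻¹ A Aᴴ, Matrix.nonsing_inv_mul _ hdx, Matrix.one_mul,
        Matrix.mul_nonsing_inv _ hdxH]
    rw [hEE]
    nth_rewrite 1 [h1]
    calc A⁻¹ * (A * Aᴴ) * Aᴴ⁻¹ - A⁻¹ * (B * Bᴴ) * Aᴴ⁻¹
        = A⁻¹ * ((A * Aᴴ - B * Bᴴ) * Aᴴ⁻¹) := by
          rw [Matrix.sub_mul, Matrix.mul_sub]
          simp only [Matrix.mul_assoc]
      _ = A⁻¹ * Aᴴ⁻¹ := by rw [eq1', Matrix.one_mul]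
  have hinv2 : ((1 : Matrix (Fin m2) (Fin m2) ℂ) - E * Eᴴ)⁻¹ = Aᴴ * A := by
    rw [hinv1, Matrix.mul_inv_rev, Matrix.nonsing_inv_nonsing_inv _ hdx,
      Matrix.nonsing_inv_nonsing_inv _ hdxH]
  have hAD : A * D x = γ₁' x - γ₂' x * E := by
    rw [eq3, add_sub_cancel_left]
  have claim : Aᴴ * A - A⁻¹ * (B * Bᴴ * A) = 1 := by
    calc Aᴴ * A - A⁻¹ * (B * Bᴴ * A)
        = A⁻¹ * (A * Aᴴ * A) - A⁻¹ * (B * Bᴴ * A) := by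
          rw [show A⁻¹ * (A * Aᴴ * A) = A⁻¹ * A * (Aᴴ * A) by simp only [Matrix.mul_assoc],
            Matrix.nonsing_inv_mul _ hdx, Matrix.one_mul]
      _ = A⁻¹ * ((A * Aᴴ - B * Bᴴ) * A) := by
          rw [Matrix.sub_mul, Matrix.mul_sub]
      _ = 1 := by rw [eq1', Matrix.one_mul, Matrix.nonsing_inv_mul _ hdx]
  rw [hinv2]
  symm
  calc A * D x * Eᴴ * (Aᴴ * A)
      = (A * D x) * (Eᴴ * (Aᴴ * A)) := by rw [Matrix.mul_assoc]
    _ = (γ₁' x - γ₂' x * E) * (Bᴴ * A) := by rw [hAD, ← Matrix.mul_assoc Eᴴ Aᴴ A, hEH]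
    _ = γ₁' x * Bᴴ * A - γ₂' x * (E * (Bᴴ * A)) := by
        rw [Matrix.sub_mul]
        simp only [Matrix.mul_assoc]
    _ = γ₂' x * (Aᴴ * A) - γ₂' x * (A⁻¹ * (B * Bᴴ * A)) := by
        rw [show γ₁' x * Bᴴ * A = γ₁' x * Bᴴ * A from rfl, eq2', hE]
        simp only [Matrix.mul_assoc]
    _ = γ₂' x * (Aᴴ * A - A⁻¹ * (B * Bᴴ * A)) := by rw [Matrix.mul_sub]
    _ = γ₂' x := by rw [claim, Matrix.mul_one]
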